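/- arXiv:1411.6668 — 3 statements merged into one kernel-verified Lean document; each statement's English description precedes it below -/
import Mathlib

section
/- If a finite simple graph H contains at least two distinct cycles, but every proper subgraph of H contains at most one cycle, then H is either the union of two cycles intersecting in at most one vertex, or a theta graph. -/
open SimpleGraph

/-- The degree of a vertex, as the cardinality of its neighbor set. -/
noncomputable def deg {V : Type} (G : SimpleGraph V) (v : V) : ℕ :=
  (G.neighborSet v).ncard

/-- The potential of a finite graph: `5 n(G) - 4 e(G)`. -/
noncomputable def pot {V : Type} [Fintype V] (G : SimpleGraph V) : ℤ :=
  5 * (Fintype.card V : ℤ) - 4 * (G.edgeSet.ncard : ℤ)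

/-- A graph is 5/2-critical if it has no homomorphism to the 5-cycle
but every proper subgraph has one. -/
def Critical52 {V : Type} (G : SimpleGraph V) : Prop :=
  IsEmpty (G →g cycleGraph 5) ∧
  ∀ H : G.Subgraph, H ≠ ⊤ → Nonempty (H.coe →g cycleGraph 5)

/-- The exceptional graph `E₁`: a 9-cycle `0 1 2 3 4 5 6 7 8` together
with a vertex `9` adjacent to `0`, `3` and `6`. -/
def E1 : SimpleGraph (Fin 10) := SimpleGraph.fromEdgeSet
  {s(0,1), s(1,2), s(2,3), s(3,4), s(4,5), s(5,6), s(6,7), s(7,8), s(8,0),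
   s(9,0), s(9,3), s(9,6)}

/-- The exceptional graph `E₂`: two 5-cycles `0 1 2 3 4` and `0 1 5 6 7`
sharing exactly the edge `01`, together with a path `3 8 9 6`. -/
def E2 : SimpleGraph (Fin 10) := SimpleGraph.fromEdgeSet
  {s(0,1), s(1,2), s(2,3), s(3,4), s(4,0),
   s(1,5), s(5,6), s(6,7), s(7,0),
   s(3,8), s(8,9), s(9,6)}

/-- A smallest counterexample: a 5/2-critical graph, not isomorphic to `C₃`, `E₁`, `E₂`,
with potential at least 2, such that every smaller 5/2-critical graph not isomorphic
to `C₃`, `E₁`, `E₂` has potential at most 1. -/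
def SmallestCex {V : Type} [Fintype V] (G : SimpleGraph V) : Prop :=
  Critical52 G ∧ IsEmpty (G ≃g cycleGraph 3) ∧ IsEmpty (G ≃g E1) ∧ IsEmpty (G ≃g E2) ∧
  2 ≤ pot G ∧
  ∀ (m : ℕ) (H : SimpleGraph (Fin m)), Critical52 H →
    IsEmpty (H ≃g cycleGraph 3) → IsEmpty (H ≃g E1) → IsEmpty (H ≃g E2) →
    m < Fintype.card V → pot H ≤ 1

/-- A string: a path of positive length whose endvertices have degree at least 3
and whose internal vertices have degree 2. A `k`-string is a string of length `k+1`. -/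
def IsString {V : Type} (G : SimpleGraph V) {u v : V} (p : G.Walk u v) : Prop :=
  p.IsPath ∧ 0 < p.length ∧ 3 ≤ deg G u ∧ 3 ≤ deg G v ∧
  ∀ w ∈ p.support, w ≠ u → w ≠ v → deg G w = 2

/-- `v` lies on a 5-cycle of `G`. -/
def InFiveCycle {V : Type} (G : SimpleGraph V) (v : V) : Prop :=
  ∃ (w : V) (c : G.Walk w w), c.IsCycle ∧ c.length = 5 ∧ v ∈ c.support

/-- `v` is a `(k₁,k₂,k₃)`-vertex: it has degree 3 and is the end of a `k₁`-string,
a `k₂`-string and a `k₃`-string leaving `v` through its three distinct edges. -/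
def IsVertex3 {V : Type} (G : SimpleGraph V) (v : V) (k1 k2 k3 : ℕ) : Prop :=
  deg G v = 3 ∧ ∃ (u1 u2 u3 : V) (p1 : G.Walk v u1) (p2 : G.Walk v u2) (p3 : G.Walk v u3),
    IsString G p1 ∧ IsString G p2 ∧ IsString G p3 ∧
    p1.getVert 1 ≠ p2.getVert 1 ∧ p1.getVert 1 ≠ p3.getVert 1 ∧ p2.getVert 1 ≠ p3.getVert 1 ∧
    p1.length = k1 + 1 ∧ p2.length = k2 + 1 ∧ p3.length = k3 + 1

/-- `v` is a `(k₁,k₂,k₃,k₄)`-vertex: it has degree 4 and is the end of strings of the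
corresponding lengths leaving `v` through its four distinct edges. -/
def IsVertex4 {V : Type} (G : SimpleGraph V) (v : V) (k1 k2 k3 k4 : ℕ) : Prop :=
  deg G v = 4 ∧ ∃ (u1 u2 u3 u4 : V) (p1 : G.Walk v u1) (p2 : G.Walk v u2)
    (p3 : G.Walk v u3) (p4 : G.Walk v u4),
    IsString G p1 ∧ IsString G p2 ∧ IsString G p3 ∧ IsString G p4 ∧
    p1.getVert 1 ≠ p2.getVert 1 ∧ p1.getVert 1 ≠ p3.getVert 1 ∧ p1.getVert 1 ≠ p4.getVert 1 ∧
    p2.getVert 1 ≠ p3.getVert 1 ∧ p2.getVert 1 ≠ p4.getVert 1 ∧ p3.getVert 1 ≠ p4.getVert 1 ∧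
    p1.length = k1 + 1 ∧ p2.length = k2 + 1 ∧ p3.length = k3 + 1 ∧ p4.length = k4 + 1

/-- `H` contains at least two distinct cycles, where cycles are counted as subgraphs,
i.e. two cycles are distinct if their edge sets differ. -/
def TwoDistinctCycles {V : Type} (H : SimpleGraph V) : Prop :=
  ∃ (v1 v2 : V) (c1 : H.Walk v1 v1) (c2 : H.Walk v2 v2),
    c1.IsCycle ∧ c2.IsCycle ∧ {e | e ∈ c1.edges} ≠ {e | e ∈ c2.edges}

/-- The degree of a 5-cycle (cell) `c` in `G`: the number of strings not contained in `c`
that intersect `c`, strings being counted by their edge sets. -/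
noncomputable def cellDegree {V : Type} (G : SimpleGraph V) {w : V} (c : G.Walk w w) : ℕ :=
  {S : Set (Sym2 V) | ∃ (u v : V) (p : G.Walk u v), IsString G p ∧ S = {e | e ∈ p.edges} ∧
    ¬ S ⊆ {e | e ∈ c.edges} ∧ ∃ x ∈ p.support, x ∈ c.support}.ncard



namespace MinTwoCyclesAux

variable {V : Type} {H : SimpleGraph V}

open SimpleGraph.Walk

lemma walk_lift (K : H.Subgraph) : ∀ {a b : V} (p : H.Walk a b),
    (∀ e ∈ p.edges, e ∈ K.edgeSet) → ∀ (ha : a ∈ K.verts) (hb : b ∈ K.verts),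
    ∃ q : K.coe.Walk ⟨a, ha⟩ ⟨b, hb⟩, q.map K.hom = p := by
  intro a b p
  induction p with
  | nil => intro _ ha hb; exact ⟨Walk.nil, rfl⟩
  | @cons a c b h p ih =>
    intro hp ha hb
    have he : K.Adj a c := (hp _ List.mem_cons_self : s(a,c) ∈ K.edgeSet)
    obtain ⟨q, hq⟩ := ih (fun e he' => hp e (List.mem_cons_of_mem _ he')) (K.edge_vert he.symm) hb
    exact ⟨Walk.cons (by exact he) q, by subst hq; rfl⟩

lemma cycle_start_mem {K : H.Subgraph} {v : V} {c : H.Walk v v} (hc : c.IsCycle)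
    (he : ∀ e ∈ c.edges, e ∈ K.edgeSet) : v ∈ K.verts := by
  cases c with
  | nil => exact absurd hc Walk.IsCycle.not_of_nil
  | cons h p => exact K.edge_vert (he _ List.mem_cons_self)

lemma force_top
    (hmin : ∀ H' : H.Subgraph, H' ≠ ⊤ →
      ∀ (v1 v2 : H'.verts) (c1 : H'.coe.Walk v1 v1) (c2 : H'.coe.Walk v2 v2),
        c1.IsCycle → c2.IsCycle → {e | e ∈ c1.edges} = {e | e ∈ c2.edges})
    (K : H.Subgraph) {v1 v2 : V} {c1 : H.Walk v1 v1} {c2 : H.Walk v2 v2}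
    (h1 : c1.IsCycle) (h2 : c2.IsCycle)
    (he1 : ∀ e ∈ c1.edges, e ∈ K.edgeSet) (he2 : ∀ e ∈ c2.edges, e ∈ K.edgeSet)
    (hne : {e | e ∈ c1.edges} ≠ {e | e ∈ c2.edges}) : K = ⊤ := by
  by_contra hK
  obtain ⟨q1, hq1⟩ := walk_lift K c1 he1 (cycle_start_mem h1 he1) (cycle_start_mem h1 he1)
  obtain ⟨q2, hq2⟩ := walk_lift K c2 he2 (cycle_start_mem h2 he2) (cycle_start_mem h2 he2)
  have hq1c : q1.IsCycle := by
    rw [← Walk.map_isCycle_iff_of_injective (Subgraph.hom_injective (x := K))]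
    rw [hq1]; exact h1
  have hq2c : q2.IsCycle := by
    rw [← Walk.map_isCycle_iff_of_injective (Subgraph.hom_injective (x := K))]
    rw [hq2]; exact h2
  have hEq := hmin K hK _ _ q1 q2 hq1c hq2c
  apply hne
  have e1 : c1.edges = q1.edges.map (Sym2.map K.hom) := by
    have := congrArg Walk.edges hq1
    rw [Walk.edges_map] at this
    exact this.symm
  have e2 : c2.edges = q2.edges.map (Sym2.map K.hom) := by
    have := congrArg Walk.edges hq2
    rw [Walk.edges_map] at this
    exact this.symm
  ext e
  simp only [Set.mem_setOf_eq, e1, e2, List.mem_map]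
  constructor
  · rintro ⟨e', he', rfl⟩
    exact ⟨e', (Set.ext_iff.mp hEq e').mp he', rfl⟩
  · rintro ⟨e', he', rfl⟩
    exact ⟨e', (Set.ext_iff.mp hEq e').mpr he', rfl⟩

lemma mem_tail_of_closed {v : V} {w : H.Walk v v} (hn : ¬w.Nil) {x : V} :
    x ∈ w.support ↔ x ∈ w.support.tail := by
  cases w with
  | nil => exact absurd Walk.nil_nil hn
  | cons h p =>
    simp only [Walk.support_cons, List.tail_cons, List.mem_cons]
    constructor
    · rintro (rfl | hx)
      · exact Walk.end_mem_support p
      · exact hx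
    · exact Or.inr

lemma mem_support_rotate [DecidableEq V] {s u : V} {c : H.Walk s s} (hc : c.IsCycle) (h : u ∈ c.support) {x : V} :
    x ∈ (c.rotate u h).support ↔ x ∈ c.support := by
  rw [mem_tail_of_closed (hc.rotate h).not_nil, mem_tail_of_closed hc.not_nil]
  exact (Walk.support_rotate c u h).mem_iff

lemma cycle_split [DecidableEq V] {s x : V} {d : H.Walk s s} (hd : d.IsCycle)
    (hx : x ∈ d.support) (hxs : x ≠ s) :
    (d.takeUntil x hx).IsPath ∧ (d.dropUntil x hx).IsPath ∧
    d.support.tail = (d.takeUntil x hx).support.tail ++ (d.dropUntil x hx).support.tail := by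
  have hsup : d.support = (d.takeUntil x hx).support ++ (d.dropUntil x hx).support.tail := by
    have := Walk.support_append (d.takeUntil x hx) (d.dropUntil x hx)
    rw [Walk.take_spec] at this
    exact this
  have htail : d.support.tail
      = (d.takeUntil x hx).support.tail ++ (d.dropUntil x hx).support.tail := by
    rw [hsup, Walk.support_eq_cons (d.takeUntil x hx)]
    rfl
  have hnd : d.support.tail.Nodup := hd.support_nodup
  rw [htail] at hnd
  obtain ⟨hn1, hn2, hdisj⟩ := List.nodup_append'.mp hnd
  have hsx : s ∈ (d.dropUntil x hx).support.tail := by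
    have hm : s ∈ (d.dropUntil x hx).support := Walk.end_mem_support _
    rw [Walk.support_eq_cons, List.mem_cons] at hm
    rcases hm with hm | hm
    · exact absurd hm.symm hxs
    · exact hm
  have hxt : x ∈ (d.takeUntil x hx).support.tail := by
    have hm : x ∈ (d.takeUntil x hx).support := Walk.end_mem_support _
    rw [Walk.support_eq_cons, List.mem_cons] at hm
    rcases hm with hm | hm
    · exact absurd hm hxs
    · exact hm
  refine ⟨?_, ?_, htail⟩
  · rw [Walk.isPath_def, Walk.support_eq_cons, List.nodup_cons]
    exact ⟨fun hs' => hdisj hs' hsx, hn1⟩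
  · rw [Walk.isPath_def, Walk.support_eq_cons, List.nodup_cons]
    exact ⟨fun hx' => hdisj hxt hx', hn2⟩

lemma ear_extract (S : Set V) (E : Set (Sym2 V)) :
    ∀ (n : ℕ) {a b : V} (p : H.Walk a b), p.length ≤ n → p.IsPath → a ∈ S → b ∈ S →
    (∃ e ∈ p.edges, e ∉ E) →
    ∃ (u w : V), u ∈ S ∧ w ∈ S ∧ ∃ q : H.Walk u w, q.IsPath ∧
      (∃ e ∈ q.edges, e ∉ E) ∧
      (∀ x ∈ q.support, x ≠ u → x ≠ w → x ∉ S) := by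
  intro n
  induction n with
  | zero =>
    intro a b p hl _ _ _ hbad
    obtain ⟨e, he, _⟩ := hbad
    rw [Nat.le_zero] at hl
    have : p.edges.length = 0 := by rw [Walk.length_edges, hl]
    rw [List.length_eq_zero_iff.mp this] at he
    exact absurd he List.not_mem_nil
  | succ n ih =>
    intro a b p hl hp ha hb hbad
    classical
    by_cases hex : ∃ x ∈ p.support, x ≠ a ∧ x ≠ b ∧ x ∈ S
    · obtain ⟨x, hxs, hxa, hxb, hxS⟩ := hex
      have hlen : (p.takeUntil x hxs).length + (p.dropUntil x hxs).length = p.length := by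
        have := Walk.length_append (p.takeUntil x hxs) (p.dropUntil x hxs)
        rw [Walk.take_spec] at this
        exact this.symm
      have hta : 1 ≤ (p.takeUntil x hxs).length := by
        by_contra hzero
        push_neg at hzero
        exact hxa (Walk.eq_of_length_eq_zero (Nat.lt_one_iff.mp hzero)).symm
      have htb : 1 ≤ (p.dropUntil x hxs).length := by
        by_contra hzero
        push_neg at hzero
        exact hxb (Walk.eq_of_length_eq_zero (Nat.lt_one_iff.mp hzero))
      have hed : p.edges = (p.takeUntil x hxs).edges ++ (p.dropUntil x hxs).edges := by
        have := Walk.edges_append (p.takeUntil x hxs) (p.dropUntil x hxs)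
        rw [Walk.take_spec] at this
        exact this
      obtain ⟨e, he, heE⟩ := hbad
      rw [hed] at he
      rcases List.mem_append.mp he with he' | he'
      · exact ih (p.takeUntil x hxs) (by omega) (hp.takeUntil hxs) ha hxS ⟨e, he', heE⟩
      · exact ih (p.dropUntil x hxs) (by omega) (hp.dropUntil hxs) hxS hb ⟨e, he', heE⟩
    · push_neg at hex
      exact ⟨a, b, ha, hb, p, hp, hbad, hex⟩

lemma edges_of_length_one {u w : V} {p : H.Walk u w} (h : p.length = 1) :
    p.edges = [s(u, w)] := by
  cases p with
  | nil => simp at h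
  | @cons _ x _ hadj p' =>
    rw [Walk.length_cons, Nat.add_eq_right] at h
    have hxw : x = w := Walk.eq_of_length_eq_zero h
    subst hxw
    have : p'.edges.length = 0 := by rw [Walk.length_edges, h]
    rw [Walk.edges_cons, List.length_eq_zero_iff.mp this]

lemma path_edge_length_one {u w : V} {p : H.Walk u w} (huw : u ≠ w) (hp : p.IsPath)
    (h : s(u, w) ∈ p.edges) : p.length = 1 := by
  cases p with
  | nil => simp at h
  | @cons _ x _ hadj p' =>
    rw [Walk.edges_cons, List.mem_cons] at h
    rw [Walk.cons_isPath_iff] at hp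
    rcases h with h | h
    · rw [Sym2.eq_iff] at h
      rcases h with ⟨-, rfl⟩ | ⟨-, h2⟩
      · rw [Walk.length_cons, Nat.add_eq_right]
        rw [Walk.isPath_iff_eq_nil.mp hp.1]
        rfl
      · exact absurd h2.symm huw
    · exact absurd (Walk.fst_mem_support_of_mem_edges p' h) hp.2

lemma cycle_of_two_paths {u w : V} (huw : u ≠ w) {p q : H.Walk u w}
    (hp : p.IsPath) (hq : q.IsPath)
    (hdisj : ∀ x, x ∈ p.support → x ∈ q.support → x = u ∨ x = w)
    (hedge : ∀ e ∈ p.edges, e ∉ q.edges) :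
    (p.append q.reverse).IsCycle := by
  constructor
  constructor
  constructor
  · -- edges nodup
    rw [Walk.edges_append, Walk.edges_reverse]
    exact List.Nodup.append hp.isTrail.edges_nodup (List.nodup_reverse.mpr hq.isTrail.edges_nodup)
      (fun e hep heq => hedge e hep (List.mem_reverse.mp heq))
  · -- ne nil
    intro hnil
    apply huw
    have hlen : (p.append q.reverse).length = 0 := by rw [hnil]; rfl
    rw [Walk.length_append] at hlen
    exact Walk.eq_of_length_eq_zero (p := p) (by omega)
  · -- support.tail nodup
    rw [Walk.tail_support_append]
    refine List.Nodup.append ((List.tail_sublist _).nodup hp.support_nodup)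
      ((List.tail_sublist _).nodup hq.reverse.support_nodup) ?_
    intro x hx1 hx2
    have hxp : x ∈ p.support := List.mem_of_mem_tail hx1
    have hxq : x ∈ q.support := by
      have : x ∈ q.reverse.support := List.mem_of_mem_tail hx2
      rw [Walk.support_reverse, List.mem_reverse] at this
      exact this
    rcases hdisj x hxp hxq with rfl | rfl
    · have := hp.support_nodup
      rw [Walk.support_eq_cons, List.nodup_cons] at this
      exact this.1 hx1
    · have := hq.reverse.support_nodup
      rw [Walk.support_eq_cons, List.nodup_cons] at this
      exact this.1 hx2

lemma assemble [DecidableEq V]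
    (hmin : ∀ H' : H.Subgraph, H' ≠ ⊤ →
      ∀ (v1 v2 : H'.verts) (c1 : H'.coe.Walk v1 v1) (c2 : H'.coe.Walk v2 v2),
        c1.IsCycle → c2.IsCycle → {e | e ∈ c1.edges} = {e | e ∈ c2.edges})
    {u w : V} (huw : u ≠ w) {d1 : H.Walk u u} (hd1 : d1.IsCycle)
    (hwd1 : w ∈ d1.support)
    {q : H.Walk u w} (hqp : q.IsPath)
    (hqint : ∀ x ∈ q.support, x ≠ u → x ≠ w → x ∉ d1.support)
    {e0 : Sym2 V} (he0q : e0 ∈ q.edges) (he0E : e0 ∉ d1.edges) :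
    (∃ (u w : V), u ≠ w ∧ ∃ (p1 p2 p3 : H.Walk u w),
      p1.IsPath ∧ p2.IsPath ∧ p3.IsPath ∧
      (∀ x, x ∈ p1.support → x ∈ p2.support → x = u ∨ x = w) ∧
      (∀ x, x ∈ p1.support → x ∈ p3.support → x = u ∨ x = w) ∧
      (∀ x, x ∈ p2.support → x ∈ p3.support → x = u ∨ x = w) ∧
      ¬(p1.length = 1 ∧ p2.length = 1) ∧ ¬(p1.length = 1 ∧ p3.length = 1) ∧
      ¬(p2.length = 1 ∧ p3.length = 1) ∧
      H.edgeSet = {e | e ∈ p1.edges} ∪ {e | e ∈ p2.edges} ∪ {e | e ∈ p3.edges} ∧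
      (∀ x : V, x ∈ p1.support ∨ x ∈ p2.support ∨ x ∈ p3.support)) := by
  obtain ⟨hp1, hp2', htail1⟩ := cycle_split hd1 hwd1 (Ne.symm huw)
  have hsupd1 : d1.support
      = (d1.takeUntil w hwd1).support ++ (d1.dropUntil w hwd1).support.tail := by
    have := Walk.support_append (d1.takeUntil w hwd1) (d1.dropUntil w hwd1)
    rw [Walk.take_spec] at this; exact this
  have hed1 : d1.edges = (d1.takeUntil w hwd1).edges ++ (d1.dropUntil w hwd1).edges := by
    have := Walk.edges_append (d1.takeUntil w hwd1) (d1.dropUntil w hwd1)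
    rw [Walk.take_spec] at this; exact this
  have hlend1 : (d1.takeUntil w hwd1).length + (d1.dropUntil w hwd1).length = d1.length := by
    have := Walk.length_append (d1.takeUntil w hwd1) (d1.dropUntil w hwd1)
    rw [Walk.take_spec] at this; exact this.symm
  have hp1S : ∀ x ∈ (d1.takeUntil w hwd1).support, x ∈ d1.support :=
    fun x hx => Walk.support_takeUntil_subset _ _ hx
  have hp2S : ∀ x ∈ (d1.dropUntil w hwd1).reverse.support, x ∈ d1.support := by
    intro x hx
    rw [Walk.support_reverse, List.mem_reverse] at hx
    exact Walk.support_dropUntil_subset _ _ hx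
  have hdisj1 : ∀ x, x ∈ (d1.takeUntil w hwd1).support → x ∈ q.support → x = u ∨ x = w := by
    intro x hx1 hx2
    by_contra hcon
    push_neg at hcon
    exact hqint x hx2 hcon.1 hcon.2 (hp1S x hx1)
  have hdisj2 : ∀ x, x ∈ (d1.dropUntil w hwd1).reverse.support → x ∈ q.support
      → x = u ∨ x = w := by
    intro x hx1 hx2
    by_contra hcon
    push_neg at hcon
    exact hqint x hx2 hcon.1 hcon.2 (hp2S x hx1)
  have hedisj : ∀ e ∈ (d1.takeUntil w hwd1).edges, e ∉ q.edges := by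
    intro e hep heq
    have hed1' : e ∈ d1.edges := Walk.edges_takeUntil_subset _ _ hep
    induction e using Sym2.ind with
    | _ x y =>
      have hxy : x ≠ y := (Walk.adj_of_mem_edges _ heq).ne
      have hx : x = u ∨ x = w := hdisj1 x (Walk.fst_mem_support_of_mem_edges _ hep)
        (Walk.fst_mem_support_of_mem_edges _ heq)
      have hy : y = u ∨ y = w := hdisj1 y (Walk.snd_mem_support_of_mem_edges _ hep)
        (Walk.snd_mem_support_of_mem_edges _ heq)
      have heuw : s(x, y) = s(u, w) := by
        rcases hx with rfl | rfl <;> rcases hy with rfl | rfl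
        · exact absurd rfl hxy
        · rfl
        · rw [Sym2.eq_swap]
        · exact absurd rfl hxy
      have hq1 : q.length = 1 := path_edge_length_one huw hqp (heuw ▸ heq)
      have hqe : q.edges = [s(u, w)] := edges_of_length_one hq1
      rw [hqe] at he0q
      have he0 : e0 = s(u, w) := by simpa using he0q
      apply he0E
      rw [he0, ← heuw]
      exact hed1'
  have hC : ((d1.takeUntil w hwd1).append q.reverse).IsCycle :=
    cycle_of_two_paths huw hp1 hqp hdisj1 hedisj
  have hKtop : (d1.toSubgraph ⊔ q.toSubgraph) = ⊤ := by
    apply force_top hmin _ hd1 hC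
    · intro e he
      rw [Subgraph.edgeSet_sup]
      exact Or.inl ((Walk.mem_edges_toSubgraph d1).mpr he)
    · intro e he
      rw [Walk.edges_append, Walk.edges_reverse, List.mem_append] at he
      rw [Subgraph.edgeSet_sup]
      rcases he with he | he
      · exact Or.inl ((Walk.mem_edges_toSubgraph d1).mpr (Walk.edges_takeUntil_subset _ _ he))
      · exact Or.inr ((Walk.mem_edges_toSubgraph q).mpr (List.mem_reverse.mp he))
    · intro hEq
      apply he0E
      have hmem : e0 ∈ {e | e ∈ ((d1.takeUntil w hwd1).append q.reverse).edges} := by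
        rw [Set.mem_setOf_eq, Walk.edges_append, Walk.edges_reverse]
        exact List.mem_append.mpr (Or.inr (List.mem_reverse.mpr he0q))
      rw [← hEq] at hmem
      exact hmem
  refine ⟨u, w, huw, d1.takeUntil w hwd1, (d1.dropUntil w hwd1).reverse, q,
    hp1, hp2'.reverse, hqp, ?_, hdisj1, hdisj2, ?_, ?_, ?_, ?_, ?_⟩
  · -- p1 / p2 internally disjoint
    intro x hx1 hx2
    by_contra hcon
    push_neg at hcon
    obtain ⟨hxu, hxw⟩ := hcon
    have hx1t : x ∈ (d1.takeUntil w hwd1).support.tail := by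
      rw [Walk.support_eq_cons, List.mem_cons] at hx1
      rcases hx1 with h | h
      · exact absurd h hxu
      · exact h
    have hx2t : x ∈ (d1.dropUntil w hwd1).support.tail := by
      rw [Walk.support_reverse, List.mem_reverse] at hx2
      rw [Walk.support_eq_cons, List.mem_cons] at hx2
      rcases hx2 with h | h
      · exact absurd h hxw
      · exact h
    have hnd := hd1.support_nodup
    rw [htail1] at hnd
    exact (List.nodup_append'.mp hnd).2.2 hx1t hx2t
  · -- lengths p1 p2
    rintro ⟨h1, h2⟩
    rw [Walk.length_reverse] at h2
    have h3 := hd1.three_le_length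
    omega
  · -- lengths p1 p3
    rintro ⟨h1, h3⟩
    have ht := edges_of_length_one (p := d1.takeUntil w hwd1) h1
    have hqe := edges_of_length_one (p := q) h3
    apply he0E
    rw [hqe] at he0q
    have he0 : e0 = s(u, w) := by simpa using he0q
    rw [he0]
    exact Walk.edges_takeUntil_subset _ _ (by rw [ht]; exact List.mem_singleton.mpr rfl)
  · -- lengths p2 p3
    rintro ⟨h2, h3⟩
    rw [Walk.length_reverse] at h2
    have hdr := edges_of_length_one (p := d1.dropUntil w hwd1) h2
    have hqe := edges_of_length_one (p := q) h3
    apply he0E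
    rw [hqe] at he0q
    have he0 : e0 = s(u, w) := by simpa using he0q
    rw [he0]
    exact Walk.edges_dropUntil_subset _ _ (by rw [hdr, Sym2.eq_swap]; exact List.mem_singleton.mpr rfl)
  · -- edge set
    have h1 : H.edgeSet = (d1.toSubgraph ⊔ q.toSubgraph).edgeSet := by
      rw [hKtop, Subgraph.edgeSet_top]
    rw [h1, Subgraph.edgeSet_sup, Walk.edgeSet_toSubgraph, Walk.edgeSet_toSubgraph]
    ext e
    simp only [Set.mem_union, Set.mem_setOf_eq, Walk.mem_edgeSet]
    constructor
    · rintro (he | he)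
      · rw [hed1, List.mem_append] at he
        rcases he with he | he
        · exact Or.inl (Or.inl he)
        · exact Or.inl (Or.inr (by rw [Walk.edges_reverse, List.mem_reverse]; exact he))
      · exact Or.inr he
    · rintro ((he | he) | he)
      · exact Or.inl (by rw [hed1]; exact List.mem_append.mpr (Or.inl he))
      · rw [Walk.edges_reverse, List.mem_reverse] at he
        exact Or.inl (by rw [hed1]; exact List.mem_append.mpr (Or.inr he))
      · exact Or.inr he
  · -- cover
    intro x
    have hx : x ∈ (d1.toSubgraph ⊔ q.toSubgraph).verts := by
      rw [hKtop, Subgraph.verts_top]; trivial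
    rw [Subgraph.verts_sup, Set.mem_union, Walk.verts_toSubgraph, Walk.verts_toSubgraph] at hx
    rcases hx with hx | hx
    · rw [Set.mem_setOf_eq, hsupd1, List.mem_append] at hx
      rcases hx with hx | hx
      · exact Or.inl hx
      · refine Or.inr (Or.inl ?_)
        rw [Walk.support_reverse, List.mem_reverse]
        exact List.mem_of_mem_tail hx
    · exact Or.inr (Or.inr hx)

lemma thetaCase [DecidableEq V]
    (hmin : ∀ H' : H.Subgraph, H' ≠ ⊤ →
      ∀ (v1 v2 : H'.verts) (c1 : H'.coe.Walk v1 v1) (c2 : H'.coe.Walk v2 v2),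
        c1.IsCycle → c2.IsCycle → {e | e ∈ c1.edges} = {e | e ∈ c2.edges})
    {va vb : V} {ca : H.Walk va va} {cb : H.Walk vb vb}
    (hca : ca.IsCycle) (hcb : cb.IsCycle)
    {s s' : V} (hsa : s ∈ ca.support) (hsb : s ∈ cb.support)
    (hs'a : s' ∈ ca.support) (hs'b : s' ∈ cb.support) (hss : s ≠ s')
    {ebad : Sym2 V} (hbadb : ebad ∈ cb.edges) (hbada : ebad ∉ ca.edges) :
    (∃ (u w : V), u ≠ w ∧ ∃ (p1 p2 p3 : H.Walk u w),
      p1.IsPath ∧ p2.IsPath ∧ p3.IsPath ∧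
      (∀ x, x ∈ p1.support → x ∈ p2.support → x = u ∨ x = w) ∧
      (∀ x, x ∈ p1.support → x ∈ p3.support → x = u ∨ x = w) ∧
      (∀ x, x ∈ p2.support → x ∈ p3.support → x = u ∨ x = w) ∧
      ¬(p1.length = 1 ∧ p2.length = 1) ∧ ¬(p1.length = 1 ∧ p3.length = 1) ∧
      ¬(p2.length = 1 ∧ p3.length = 1) ∧
      H.edgeSet = {e | e ∈ p1.edges} ∪ {e | e ∈ p2.edges} ∪ {e | e ∈ p3.edges} ∧
      (∀ x : V, x ∈ p1.support ∨ x ∈ p2.support ∨ x ∈ p3.support)) := by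
  have hd := hcb.rotate hsb
  have hbadd : ebad ∈ (cb.rotate s hsb).edges := (cb.rotate_edges s hsb).perm.mem_iff.mpr hbadb
  have hs'd : s' ∈ (cb.rotate s hsb).support := (mem_support_rotate hcb hsb).mpr hs'b
  obtain ⟨hq1p, hq2p, -⟩ := cycle_split hd hs'd hss.symm
  have hed : (cb.rotate s hsb).edges
      = ((cb.rotate s hsb).takeUntil s' hs'd).edges ++ ((cb.rotate s hsb).dropUntil s' hs'd).edges := by
    have := Walk.edges_append ((cb.rotate s hsb).takeUntil s' hs'd)
      ((cb.rotate s hsb).dropUntil s' hs'd)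
    rw [Walk.take_spec] at this; exact this
  have hear : ∃ (u w : V), u ∈ {x | x ∈ ca.support} ∧ w ∈ {x | x ∈ ca.support} ∧
      ∃ q : H.Walk u w, q.IsPath ∧
      (∃ e ∈ q.edges, e ∉ {e | e ∈ ca.edges}) ∧
      (∀ x ∈ q.support, x ≠ u → x ≠ w → x ∉ {x | x ∈ ca.support}) := by
    rw [hed] at hbadd
    rcases List.mem_append.mp hbadd with h | h
    · exact ear_extract {x | x ∈ ca.support} {e | e ∈ ca.edges} _
        ((cb.rotate s hsb).takeUntil s' hs'd) le_rfl hq1p hsa hs'a ⟨ebad, h, hbada⟩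
    · exact ear_extract {x | x ∈ ca.support} {e | e ∈ ca.edges} _
        ((cb.rotate s hsb).dropUntil s' hs'd) le_rfl hq2p hs'a hsa ⟨ebad, h, hbada⟩
  obtain ⟨u, w, hu, hw, q, hqp, ⟨e0, he0q, he0E⟩, hqint⟩ := hear
  have huw : u ≠ w := by
    rintro rfl
    rw [Walk.isPath_iff_eq_nil] at hqp
    rw [hqp] at he0q
    simp at he0q
  have hud : u ∈ ca.support := hu
  refine assemble hmin huw (hca.rotate hud) ((mem_support_rotate hca hud).mpr hw) hqp
    ?_ he0q ?_
  · intro x hx h1 h2 hmem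
    exact hqint x hx h1 h2 ((mem_support_rotate hca hud).mp hmem)
  · intro hmem
    exact he0E ((ca.rotate_edges u hud).perm.mem_iff.mp hmem)

end MinTwoCyclesAux

theorem min_two_cycles_structure_aux {V : Type} [Fintype V] (H : SimpleGraph V)
    (h2 : ∃ (v1 v2 : V) (c1 : H.Walk v1 v1) (c2 : H.Walk v2 v2),
      c1.IsCycle ∧ c2.IsCycle ∧ {e | e ∈ c1.edges} ≠ {e | e ∈ c2.edges})
    (hmin : ∀ H' : H.Subgraph, H' ≠ ⊤ →
      ∀ (v1 v2 : H'.verts) (c1 : H'.coe.Walk v1 v1) (c2 : H'.coe.Walk v2 v2),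
        c1.IsCycle → c2.IsCycle → {e | e ∈ c1.edges} = {e | e ∈ c2.edges}) :
    (∃ (v1 v2 : V) (c1 : H.Walk v1 v1) (c2 : H.Walk v2 v2),
      c1.IsCycle ∧ c2.IsCycle ∧
      H.edgeSet = {e | e ∈ c1.edges} ∪ {e | e ∈ c2.edges} ∧
      (∀ x : V, x ∈ c1.support ∨ x ∈ c2.support) ∧
      {x | x ∈ c1.support ∧ x ∈ c2.support}.Subsingleton) ∨
    (∃ (u w : V), u ≠ w ∧ ∃ (p1 p2 p3 : H.Walk u w),
      p1.IsPath ∧ p2.IsPath ∧ p3.IsPath ∧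
      (∀ x, x ∈ p1.support → x ∈ p2.support → x = u ∨ x = w) ∧
      (∀ x, x ∈ p1.support → x ∈ p3.support → x = u ∨ x = w) ∧
      (∀ x, x ∈ p2.support → x ∈ p3.support → x = u ∨ x = w) ∧
      ¬(p1.length = 1 ∧ p2.length = 1) ∧ ¬(p1.length = 1 ∧ p3.length = 1) ∧
      ¬(p2.length = 1 ∧ p3.length = 1) ∧
      H.edgeSet = {e | e ∈ p1.edges} ∪ {e | e ∈ p2.edges} ∪ {e | e ∈ p3.edges} ∧
      (∀ x : V, x ∈ p1.support ∨ x ∈ p2.support ∨ x ∈ p3.support)) := by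
  classical
  obtain ⟨v1, v2, c1, c2, hc1, hc2, hne⟩ := h2
  by_cases hsub : ({x | x ∈ c1.support ∧ x ∈ c2.support} : Set V).Subsingleton
  · -- two cycles meeting in at most one vertex
    have hKtop : (c1.toSubgraph ⊔ c2.toSubgraph) = ⊤ := by
      apply MinTwoCyclesAux.force_top hmin _ hc1 hc2 ?_ ?_ hne
      · intro e he
        rw [SimpleGraph.Subgraph.edgeSet_sup]
        exact Or.inl ((SimpleGraph.Walk.mem_edges_toSubgraph c1).mpr he)
      · intro e he
        rw [SimpleGraph.Subgraph.edgeSet_sup]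
        exact Or.inr ((SimpleGraph.Walk.mem_edges_toSubgraph c2).mpr he)
    refine Or.inl ⟨v1, v2, c1, c2, hc1, hc2, ?_, ?_, hsub⟩
    · rw [show ({e | e ∈ c1.edges} ∪ {e | e ∈ c2.edges} : Set (Sym2 V))
          = (c1.toSubgraph ⊔ c2.toSubgraph).edgeSet from (by
        rw [SimpleGraph.Subgraph.edgeSet_sup, SimpleGraph.Walk.edgeSet_toSubgraph,
          SimpleGraph.Walk.edgeSet_toSubgraph]; rfl), hKtop, SimpleGraph.Subgraph.edgeSet_top]
    · intro x
      have hx : x ∈ (c1.toSubgraph ⊔ c2.toSubgraph).verts := by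
        rw [hKtop, SimpleGraph.Subgraph.verts_top]; trivial
      rw [SimpleGraph.Subgraph.verts_sup, Set.mem_union, SimpleGraph.Walk.verts_toSubgraph,
        SimpleGraph.Walk.verts_toSubgraph] at hx
      exact hx
  · rw [Set.not_subsingleton_iff] at hsub
    obtain ⟨s, hs, s', hs', hss⟩ := hsub
    by_cases hbad : ∃ e ∈ c2.edges, e ∉ c1.edges
    · obtain ⟨e, he1, he2⟩ := hbad
      exact Or.inr (MinTwoCyclesAux.thetaCase hmin hc1 hc2 hs.1 hs.2 hs'.1 hs'.2 hss he1 he2)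
    · push_neg at hbad
      have hex : ∃ e ∈ c1.edges, e ∉ c2.edges := by
        by_contra hx
        push_neg at hx
        exact hne (Set.ext fun e => ⟨fun h => hx e h, fun h => hbad e h⟩)
      obtain ⟨e, he1, he2⟩ := hex
      exact Or.inr (MinTwoCyclesAux.thetaCase hmin hc2 hc1 hs.2 hs.1 hs'.2 hs'.1 hss he1 he2)


/-- If a finite graph `H` contains at least two distinct cycles but
every proper subgraph of `H` contains at most one cycle, then `H` is either the union of
two cycles intersecting in at most one vertex, or a theta graph. -/
theorem min_two_cycles_structure {V : Type} [Fintype V] (H : SimpleGraph V)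
    (h2 : TwoDistinctCycles H)
    (hmin : ∀ H' : H.Subgraph, H' ≠ ⊤ →
      ∀ (v1 v2 : H'.verts) (c1 : H'.coe.Walk v1 v1) (c2 : H'.coe.Walk v2 v2),
        c1.IsCycle → c2.IsCycle → {e | e ∈ c1.edges} = {e | e ∈ c2.edges}) :
    -- `H` is the union of two cycles intersecting in at most one vertex …
    (∃ (v1 v2 : V) (c1 : H.Walk v1 v1) (c2 : H.Walk v2 v2),
      c1.IsCycle ∧ c2.IsCycle ∧
      H.edgeSet = {e | e ∈ c1.edges} ∪ {e | e ∈ c2.edges} ∧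
      (∀ x : V, x ∈ c1.support ∨ x ∈ c2.support) ∧
      {x | x ∈ c1.support ∧ x ∈ c2.support}.Subsingleton) ∨
    -- … or a theta graph: three internally disjoint paths with common distinct endvertices,
    -- at most one of them of length one.
    (∃ (u w : V), u ≠ w ∧ ∃ (p1 p2 p3 : H.Walk u w),
      p1.IsPath ∧ p2.IsPath ∧ p3.IsPath ∧
      (∀ x, x ∈ p1.support → x ∈ p2.support → x = u ∨ x = w) ∧
      (∀ x, x ∈ p1.support → x ∈ p3.support → x = u ∨ x = w) ∧
      (∀ x, x ∈ p2.support → x ∈ p3.support → x = u ∨ x = w) ∧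
      ¬(p1.length = 1 ∧ p2.length = 1) ∧ ¬(p1.length = 1 ∧ p3.length = 1) ∧
      ¬(p2.length = 1 ∧ p3.length = 1) ∧
      H.edgeSet = {e | e ∈ p1.edges} ∪ {e | e ∈ p2.edges} ∪ {e | e ∈ p3.edges} ∧
      (∀ x : V, x ∈ p1.support ∨ x ∈ p2.support ∨ x ∈ p3.support)) := by
  exact min_two_cycles_structure_aux H h2 hmin
end

section
/- Every 5/2-critical graph has minimum degree at least two and contains no k-string with k ≥ 3. -/
open SimpleGraph

section AuxProof

open SimpleGraph Walk Classical

private lemma aux_getVert_getElem {V : Type} {G : SimpleGraph V} {u v : V} (p : G.Walk u v)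
    (i : ℕ) (hi : i ≤ p.length) :
    p.getVert i = p.support[i]'(by rw [SimpleGraph.Walk.length_support]; omega) := by
  induction p generalizing i with
  | nil =>
    simp only [SimpleGraph.Walk.length_nil, Nat.le_zero] at hi
    subst hi
    simp
  | cons h q ih =>
    cases i with
    | zero => simp
    | succ n =>
      have hn : n ≤ q.length := by simpa [SimpleGraph.Walk.length_cons] using hi
      have := ih n hn
      simpa [SimpleGraph.Walk.getVert_cons_succ, SimpleGraph.Walk.support_cons] using this

private lemma aux_getVert_inj {V : Type} {G : SimpleGraph V} {u v : V} {p : G.Walk u v}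
    (hp : p.IsPath) {i j : ℕ} (hi : i ≤ p.length) (hj : j ≤ p.length)
    (h : p.getVert i = p.getVert j) : i = j := by
  rw [aux_getVert_getElem p i hi, aux_getVert_getElem p j hj] at h
  exact (List.Nodup.getElem_inj_iff hp.support_nodup).mp h

private lemma aux_c5_adj {u v : Fin 5} :
    (SimpleGraph.cycleGraph 5).Adj u v ↔ u - v = 1 ∨ v - u = 1 :=
  SimpleGraph.cycleGraph_adj (n := 3)

end AuxProof

open Fin.CommRing in
/-- Every 5/2-critical graph has minimum degree at least two and
contains no `k`-string with `k ≥ 3` (a `k`-string has `k+1` edges). -/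
theorem critical52_minDegree_and_no_long_strings {V : Type} [Fintype V] (G : SimpleGraph V)
    (hcrit : Critical52 G) :
    (∀ v : V, 2 ≤ deg G v) ∧
    (∀ k : ℕ, 3 ≤ k → ∀ (u v : V) (p : G.Walk u v), IsString G p → p.length ≠ k + 1) := by
  classical
  constructor
  · -- minimum degree at least two
    intro v
    by_contra hv
    push_neg at hv
    -- the neighbor set of v is a subsingleton
    have hss : (G.neighborSet v).Subsingleton := by
      intro b1 h1 b2 h2
      by_contra hne
      have hsub : ({b1, b2} : Set V) ⊆ G.neighborSet v := by
        intro x hx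
        rcases hx with rfl | rfl
        · exact h1
        · exact h2
      have h2le : 2 ≤ (G.neighborSet v).ncard := by
        calc 2 = ({b1, b2} : Set V).ncard := (Set.ncard_pair hne).symm
        _ ≤ (G.neighborSet v).ncard := Set.ncard_le_ncard hsub (Set.toFinite _)
      have : deg G v = (G.neighborSet v).ncard := rfl
      omega
    set H : G.Subgraph := (⊤ : G.Subgraph).deleteVerts {v} with hH
    have hHne : H ≠ ⊤ := by
      intro h
      have : v ∈ H.verts := by
        rw [h, SimpleGraph.Subgraph.verts_top]
        trivial
      rw [hH, SimpleGraph.Subgraph.deleteVerts_verts] at this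
      simp [SimpleGraph.Subgraph.verts_top] at this
    obtain ⟨f⟩ := hcrit.2 H hHne
    have hmem : ∀ w : V, w ≠ v → w ∈ H.verts := by
      intro w hw
      rw [hH, SimpleGraph.Subgraph.deleteVerts_verts]
      simp [SimpleGraph.Subgraph.verts_top, hw]
    set F : (w : V) → w ≠ v → Fin 5 := fun w hw => f ⟨w, hmem w hw⟩ with hF
    set z : Fin 5 := if h : (G.neighborSet v).Nonempty then
        F h.choose (G.ne_of_adj h.choose_spec).symm + 1 else 0 with hz
    set g : V → Fin 5 := fun w => if hw : w = v then z else F w hw with hg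
    have hhom : ∀ a b : V, G.Adj a b → (SimpleGraph.cycleGraph 5).Adj (g a) (g b) := by
      have key : ∀ b : V, G.Adj v b →
          (SimpleGraph.cycleGraph 5).Adj (g v) (g b) := by
        intro b hb
        have hbv : b ≠ v := (G.ne_of_adj hb).symm
        have hnonempty : (G.neighborSet v).Nonempty := ⟨b, hb⟩
        have hbchoose : b = hnonempty.choose :=
          hss hb hnonempty.choose_spec
        have hFext : ∀ (w1 w2 : V) (h1 : w1 ≠ v) (h2 : w2 ≠ v), w1 = w2 →
            F w1 h1 = F w2 h2 := by
          rintro w1 w2 h1 h2 rfl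
          rfl
        have hchne : hnonempty.choose ≠ v := (G.ne_of_adj hnonempty.choose_spec).symm
        have hgv : g v = F b hbv + 1 := by
          rw [hg]
          simp only [dif_pos rfl]
          rw [hz, dif_pos hnonempty, hFext _ _ hchne hbv hbchoose.symm]
          simp
        have hgb : g b = F b hbv := by
          rw [hg]; simp only [dif_neg hbv]
        rw [hgv, hgb, aux_c5_adj]
        left; ring
      intro a b hab
      by_cases hav : a = v
      · subst hav; exact key b hab
      by_cases hbv : b = v
      · subst hbv; exact (key a hab.symm).symm
      have hHadj : H.Adj a b := by
        rw [hH, SimpleGraph.Subgraph.deleteVerts_adj]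
        refine ⟨trivial, by simpa using hav, trivial, by simpa using hbv, ?_⟩
        exact SimpleGraph.Subgraph.top_adj.mpr hab
      have := f.map_adj (SimpleGraph.Subgraph.Adj.coe hHadj)
      have hga : g a = F a hav := by rw [hg]; simp only [dif_neg hav]
      have hgb : g b = F b hbv := by rw [hg]; simp only [dif_neg hbv]
      rw [hga, hgb]
      exact this
    exact hcrit.1.false ⟨g, fun {a b} hab => hhom a b hab⟩
  · -- no long strings
    intro k hk u v p hp hlen
    have hℓ : 4 ≤ p.length := by omega
    obtain ⟨hpath, _, _, _, hdeg2⟩ := hp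
    have hinj := fun {i j : ℕ} (hi : i ≤ p.length) (hj : j ≤ p.length)
      (h : p.getVert i = p.getVert j) => aux_getVert_inj hpath hi hj h
    have hadj12 : G.Adj (p.getVert 1) (p.getVert 2) := p.adj_getVert_succ (by omega)
    set H : G.Subgraph := (⊤ : G.Subgraph).deleteEdges {s(p.getVert 1, p.getVert 2)} with hH
    have hHne : H ≠ ⊤ := by
      intro h
      have h2 : H.Adj (p.getVert 1) (p.getVert 2) := by
        rw [h]; exact SimpleGraph.Subgraph.top_adj.mpr hadj12
      rw [hH, SimpleGraph.Subgraph.deleteEdges_adj] at h2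
      exact h2.2 rfl
    obtain ⟨f⟩ := hcrit.2 H hHne
    have hmem : ∀ w : V, w ∈ H.verts := by
      intro w
      rw [hH, SimpleGraph.Subgraph.deleteEdges_verts, SimpleGraph.Subgraph.verts_top]
      trivial
    set F : V → Fin 5 := fun w => f ⟨w, hmem w⟩ with hF
    -- the walk in C5 replacing the string
    set t : Fin 5 := F v - F u with ht
    set j : ℕ := (((p.length : Fin 5) - t) * 3).val with hj
    have hj4 : j ≤ 4 := by
      have := (((p.length : Fin 5) - t) * 3).isLt
      omega
    set c : ℕ → Fin 5 := fun i => F u + (i : Fin 5) - 2 * ((min i j : ℕ) : Fin 5) with hc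
    have hc0 : c 0 = F u := by
      rw [hc]; simp
    have hclen : c p.length = F v := by
      rw [hc]
      simp only
      rw [min_eq_right (by omega : j ≤ p.length), hj]
      rw [Fin.cast_val_eq_self]
      have h5 : (5 : Fin 5) = 0 := by decide
      rw [ht]
      linear_combination (F v - F u - (p.length : Fin 5)) * h5
    have hcadj : ∀ i : ℕ, (SimpleGraph.cycleGraph 5).Adj (c i) (c (i + 1)) := by
      intro i
      rw [aux_c5_adj, hc]
      simp only
      rcases lt_or_ge i j with hij | hij
      · left
        rw [min_eq_left (by omega : i + 1 ≤ j), min_eq_left (by omega : i ≤ j)]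
        push_cast
        ring
      · right
        rw [min_eq_right (by omega : j ≤ i + 1), min_eq_right hij]
        push_cast
        ring
    set g : V → Fin 5 := fun w =>
      if h : ∃ i, i ≤ p.length ∧ w = p.getVert i then c h.choose else F w with hg
    have hgPath : ∀ m : ℕ, m ≤ p.length → g (p.getVert m) = c m := by
      intro m hm
      have hex : ∃ i, i ≤ p.length ∧ p.getVert m = p.getVert i := ⟨m, hm, rfl⟩
      rw [hg]
      simp only [dif_pos hex]
      congr 1
      exact hinj hex.choose_spec.1 hm hex.choose_spec.2.symm
    have hgOff : ∀ w : V, (¬ ∃ i, 0 < i ∧ i < p.length ∧ w = p.getVert i) → g w = F w := by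
      intro w hw
      by_cases h : ∃ i, i ≤ p.length ∧ w = p.getVert i
      · obtain ⟨i, hi, rfl⟩ := h
        have h0l : i = 0 ∨ i = p.length := by
          by_contra hcon
          push_neg at hcon
          exact hw ⟨i, by omega, by omega, rfl⟩
        rcases h0l with rfl | rfl
        · rw [hgPath 0 (by omega), hc0, SimpleGraph.Walk.getVert_zero]
        · rw [hgPath p.length le_rfl, hclen, SimpleGraph.Walk.getVert_length]
      · rw [hg]; simp only [dif_neg h]
    -- neighbors of interior vertices
    have hnbr : ∀ i : ℕ, 0 < i → i < p.length → ∀ b : V, G.Adj (p.getVert i) b →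
        b = p.getVert (i - 1) ∨ b = p.getVert (i + 1) := by
      intro i hi0 hil b hb
      have hwu : p.getVert i ≠ u := by
        intro h
        have := hinj (i := i) (j := 0) (by omega) (by omega)
          (by rw [h, SimpleGraph.Walk.getVert_zero])
        omega
      have hwv : p.getVert i ≠ v := by
        intro h
        have := hinj (i := i) (j := p.length) (by omega) le_rfl
          (by rw [h, SimpleGraph.Walk.getVert_length])
        omega
      have hwmem : p.getVert i ∈ p.support :=
        SimpleGraph.Walk.mem_support_iff_exists_getVert.mpr ⟨i, rfl, by omega⟩
      have hd2 : deg G (p.getVert i) = 2 := hdeg2 _ hwmem hwu hwv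
      have hadjprev : G.Adj (p.getVert i) (p.getVert (i - 1)) := by
        have := p.adj_getVert_succ (i := i - 1) (by omega)
        rw [show i - 1 + 1 = i by omega] at this
        exact this.symm
      have hadjnext : G.Adj (p.getVert i) (p.getVert (i + 1)) :=
        p.adj_getVert_succ (by omega)
      have hnedup : p.getVert (i - 1) ≠ p.getVert (i + 1) := by
        intro h
        have := hinj (by omega : i - 1 ≤ p.length) (by omega : i + 1 ≤ p.length) h
        omega
      have hsub : ({p.getVert (i - 1), p.getVert (i + 1)} : Set V)
          ⊆ G.neighborSet (p.getVert i) := by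
        intro x hx
        rcases hx with rfl | rfl
        · exact hadjprev
        · exact hadjnext
      have heq : ({p.getVert (i - 1), p.getVert (i + 1)} : Set V)
          = G.neighborSet (p.getVert i) := by
        apply Set.eq_of_subset_of_ncard_le hsub _ (Set.toFinite _)
        rw [Set.ncard_pair hnedup]
        exact le_of_eq hd2
      have hbmem : b ∈ G.neighborSet (p.getVert i) := hb
      rw [← heq] at hbmem
      exact hbmem
    -- one-sided homomorphism step
    have hone : ∀ a b : V, G.Adj a b → (∃ i, 0 < i ∧ i < p.length ∧ a = p.getVert i) →
        (SimpleGraph.cycleGraph 5).Adj (g a) (g b) := by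
      rintro a b hab ⟨i, hi0, hil, rfl⟩
      rcases hnbr i hi0 hil b hab with rfl | rfl
      · rw [hgPath i (by omega), hgPath (i - 1) (by omega)]
        have := hcadj (i - 1)
        rw [show i - 1 + 1 = i by omega] at this
        exact this.symm
      · rw [hgPath i (by omega), hgPath (i + 1) (by omega)]
        exact hcadj i
    have hhom : ∀ a b : V, G.Adj a b → (SimpleGraph.cycleGraph 5).Adj (g a) (g b) := by
      intro a b hab
      by_cases hai : ∃ i, 0 < i ∧ i < p.length ∧ a = p.getVert i
      · exact hone a b hab hai
      by_cases hbi : ∃ i, 0 < i ∧ i < p.length ∧ b = p.getVert i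
      · exact (hone b a hab.symm hbi).symm
      have hnedel : s(a, b) ≠ s(p.getVert 1, p.getVert 2) := by
        intro h
        rw [Sym2.eq_iff] at h
        rcases h with ⟨rfl, rfl⟩ | ⟨rfl, rfl⟩
        · exact hai ⟨1, by omega, by omega, rfl⟩
        · exact hai ⟨2, by omega, by omega, rfl⟩
      have hHadj : H.Adj a b := by
        rw [hH, SimpleGraph.Subgraph.deleteEdges_adj]
        exact ⟨SimpleGraph.Subgraph.top_adj.mpr hab, by simpa using hnedel⟩
      have := f.map_adj (SimpleGraph.Subgraph.Adj.coe hHadj)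
      rw [hgOff a hai, hgOff b hbi]
      exact this
    exact hcrit.1.false ⟨g, fun {a b} hab => hhom a b hab⟩
end

section
/- Let K = v1 v2 v3 v4 v5 be a 5-cycle in a triangle-free graph G such that v1, v2, and v4 have degree three in G and v3 and v5 have degree two in G. Let u1, u2, and u4 be the neighbors of v1, v2, and v4, respectively, not contained in K. Let ψ be a graph homomorphism from G − V(K) to a 5-cycle C. If ψ(u1) is adjacent to ψ(u2) in C, then ψ extends to a graph homomorphism from G to C. -/
open SimpleGraph

private def wtab : Fin 5 → (Fin 5 × Fin 5 × Fin 5 × Fin 5 × Fin 5)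
  | 0 => (1,2,3,4,0)
  | 1 => (4,0,1,2,3)
  | 2 => (1,0,4,3,2)
  | 3 => (1,2,3,4,0)
  | 4 => (1,0,4,3,2)

private lemma wbase : ∀ d : Fin 5,
    (cycleGraph 5).Adj (wtab d).1 0 ∧ (cycleGraph 5).Adj (wtab d).2.1 1 ∧
    (cycleGraph 5).Adj (wtab d).2.2.2.1 d ∧
    (cycleGraph 5).Adj (wtab d).1 (wtab d).2.1 ∧
    (cycleGraph 5).Adj (wtab d).2.1 (wtab d).2.2.1 ∧
    (cycleGraph 5).Adj (wtab d).2.2.1 (wtab d).2.2.2.1 ∧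
    (cycleGraph 5).Adj (wtab d).2.2.2.1 (wtab d).2.2.2.2 ∧
    (cycleGraph 5).Adj (wtab d).2.2.2.2 (wtab d).1 := by decide

private lemma hshift : ∀ u v t : Fin 5, (cycleGraph 5).Adj u v →
    (cycleGraph 5).Adj (u + t) (v + t) := by decide

private lemma hneg : ∀ u v : Fin 5, (cycleGraph 5).Adj u v →
    (cycleGraph 5).Adj (-u) (-v) := by decide

private lemma hadjcases : ∀ a b : Fin 5, (cycleGraph 5).Adj a b →
    b = a + 1 ∨ b = a - 1 := by decide

private lemma keyShift (a c : Fin 5) : ∃ x1 x2 x3 x4 x5 : Fin 5,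
    (cycleGraph 5).Adj x1 a ∧ (cycleGraph 5).Adj x2 (a + 1) ∧ (cycleGraph 5).Adj x4 c ∧
    (cycleGraph 5).Adj x1 x2 ∧ (cycleGraph 5).Adj x2 x3 ∧ (cycleGraph 5).Adj x3 x4 ∧
    (cycleGraph 5).Adj x4 x5 ∧ (cycleGraph 5).Adj x5 x1 := by
  obtain ⟨h1, h2, h3, h4, h5, h6, h7, h8⟩ := wbase (c - a)
  refine ⟨(wtab (c-a)).1 + a, (wtab (c-a)).2.1 + a, (wtab (c-a)).2.2.1 + a,
    (wtab (c-a)).2.2.2.1 + a, (wtab (c-a)).2.2.2.2 + a, ?_, ?_, ?_, ?_, ?_, ?_, ?_, ?_⟩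
  · simpa using hshift _ _ a h1
  · simpa [add_comm] using hshift _ _ a h2
  · simpa [sub_add_cancel] using hshift _ _ a h3
  · exact hshift _ _ a h4
  · exact hshift _ _ a h5
  · exact hshift _ _ a h6
  · exact hshift _ _ a h7
  · exact hshift _ _ a h8

private lemma key (a b c : Fin 5) (hab : (cycleGraph 5).Adj a b) :
    ∃ x1 x2 x3 x4 x5 : Fin 5,
    (cycleGraph 5).Adj x1 a ∧ (cycleGraph 5).Adj x2 b ∧ (cycleGraph 5).Adj x4 c ∧
    (cycleGraph 5).Adj x1 x2 ∧ (cycleGraph 5).Adj x2 x3 ∧ (cycleGraph 5).Adj x3 x4 ∧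
    (cycleGraph 5).Adj x4 x5 ∧ (cycleGraph 5).Adj x5 x1 := by
  rcases hadjcases a b hab with rfl | rfl
  · exact keyShift a c
  · obtain ⟨y1, y2, y3, y4, y5, h1, h2, h3, h4, h5, h6, h7, h8⟩ := keyShift (-a) (-c)
    refine ⟨-y1, -y2, -y3, -y4, -y5, ?_, ?_, ?_, ?_, ?_, ?_, ?_, ?_⟩
    · simpa using hneg _ _ h1
    · have := hneg _ _ h2
      have e : -(-a + 1) = a - 1 := by abel
      rwa [e] at this
    · simpa using hneg _ _ h3
    · exact hneg _ _ h4
    · exact hneg _ _ h5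
    · exact hneg _ _ h6
    · exact hneg _ _ h7
    · exact hneg _ _ h8


private lemma nbr3 {V : Type} [Fintype V] (G : SimpleGraph V) {v a b c : V}
    (h : (G.neighborSet v).ncard = 3) (hab : a ≠ b) (hac : a ≠ c) (hbc : b ≠ c)
    (ha : G.Adj v a) (hb : G.Adj v b) (hc : G.Adj v c) :
    ∀ q, G.Adj v q → q = a ∨ q = b ∨ q = c := by
  have hsub : ({a, b, c} : Set V) ⊆ G.neighborSet v := by
    intro x hx
    simp only [Set.mem_insert_iff, Set.mem_singleton_iff] at hx
    rcases hx with rfl | rfl | rfl <;> assumption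
  have hcard : ({a, b, c} : Set V).ncard = 3 :=
    Set.ncard_eq_three.mpr ⟨a, b, c, hab, hac, hbc, rfl⟩
  have heq := Set.eq_of_subset_of_ncard_le hsub (by rw [h, hcard]) (Set.toFinite _)
  intro q hq
  have : q ∈ G.neighborSet v := hq
  rw [← heq] at this
  simpa using this

private lemma nbr2 {V : Type} [Fintype V] (G : SimpleGraph V) {v a b : V}
    (h : (G.neighborSet v).ncard = 2) (hab : a ≠ b)
    (ha : G.Adj v a) (hb : G.Adj v b) :
    ∀ q, G.Adj v q → q = a ∨ q = b := by
  have hsub : ({a, b} : Set V) ⊆ G.neighborSet v := by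
    intro x hx
    simp only [Set.mem_insert_iff, Set.mem_singleton_iff] at hx
    rcases hx with rfl | rfl <;> assumption
  have hcard : ({a, b} : Set V).ncard = 2 := Set.ncard_pair hab
  have heq := Set.eq_of_subset_of_ncard_le hsub (by rw [h, hcard]) (Set.toFinite _)
  intro q hq
  have : q ∈ G.neighborSet v := hq
  rw [← heq] at this
  simpa using this

/-- Let `K = v1 v2 v3 v4 v5` be a 5-cycle in a triangle-free graph `G`,
where `v1, v2, v4` have degree three and `v3, v5` have degree two, and let `u1, u2, u4`
be the neighbors of `v1, v2, v4` outside `K`. Any homomorphism `ψ` from `G - V(K)` to the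
5-cycle with `ψ u1` adjacent to `ψ u2` extends to a homomorphism from `G`. -/
theorem extend_from_three_cell {V : Type} [Fintype V] (G : SimpleGraph V)
    (htf : ∀ (w : V) (c : G.Walk w w), c.IsCycle → c.length ≠ 3)
    (v1 v2 v3 v4 v5 u1 u2 u4 : V)
    (hK : [v1, v2, v3, v4, v5].Nodup)
    (h12 : G.Adj v1 v2) (h23 : G.Adj v2 v3) (h34 : G.Adj v3 v4)
    (h45 : G.Adj v4 v5) (h51 : G.Adj v5 v1)
    (hd1 : deg G v1 = 3) (hd2 : deg G v2 = 3) (hd4 : deg G v4 = 3)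
    (hd3 : deg G v3 = 2) (hd5 : deg G v5 = 2)
    (hu1 : G.Adj v1 u1) (hu2 : G.Adj v2 u2) (hu4 : G.Adj v4 u4)
    (hu1K : u1 ∈ ({v1, v2, v3, v4, v5} : Set V)ᶜ)
    (hu2K : u2 ∈ ({v1, v2, v3, v4, v5} : Set V)ᶜ)
    (hu4K : u4 ∈ ({v1, v2, v3, v4, v5} : Set V)ᶜ)
    (ψ : G.induce ({v1, v2, v3, v4, v5} : Set V)ᶜ →g cycleGraph 5)
    (hadj : (cycleGraph 5).Adj (ψ ⟨u1, hu1K⟩) (ψ ⟨u2, hu2K⟩)) :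
    ∃ φ : G →g cycleGraph 5,
      ∀ (x : V) (hx : x ∈ ({v1, v2, v3, v4, v5} : Set V)ᶜ), φ x = ψ ⟨x, hx⟩ := by
  classical
  simp only [List.nodup_cons, List.mem_cons, List.not_mem_nil, or_false, not_or,
    List.nodup_nil, and_true, List.mem_singleton] at hK
  obtain ⟨⟨n12, n13, n14, n15⟩, ⟨n23, n24, n25⟩, ⟨n34, n35⟩, n45, -⟩ := hK
  have hu1K' := hu1K; have hu2K' := hu2K; have hu4K' := hu4K
  simp only [Set.mem_compl_iff, Set.mem_insert_iff, Set.mem_singleton_iff, not_or]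
    at hu1K' hu2K' hu4K'
  obtain ⟨m11, m12, m13, m14, m15⟩ := hu1K'
  obtain ⟨m21, m22, m23, m24, m25⟩ := hu2K'
  obtain ⟨m41, m42, m43, m44, m45⟩ := hu4K'
  simp only [deg] at hd1 hd2 hd3 hd4 hd5
  have hn1 : ∀ q, G.Adj v1 q → q = v2 ∨ q = v5 ∨ q = u1 :=
    nbr3 G hd1 n25 (fun h => m12 h.symm) (fun h => m15 h.symm) h12 h51.symm hu1
  have hn2 : ∀ q, G.Adj v2 q → q = v1 ∨ q = v3 ∨ q = u2 :=
    nbr3 G hd2 n13 (fun h => m21 h.symm) (fun h => m23 h.symm) h12.symm h23 hu2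
  have hn4 : ∀ q, G.Adj v4 q → q = v3 ∨ q = v5 ∨ q = u4 :=
    nbr3 G hd4 n35 (fun h => m43 h.symm) (fun h => m45 h.symm) h34.symm h45 hu4
  have hn3 : ∀ q, G.Adj v3 q → q = v2 ∨ q = v4 := nbr2 G hd3 n24 h23.symm h34
  have hn5 : ∀ q, G.Adj v5 q → q = v4 ∨ q = v1 :=
    nbr2 G hd5 (fun h => n14 h.symm) h45.symm h51
  obtain ⟨x1, x2, x3, x4, x5, ha1, hb2, hc4, e12, e23, e34, e45, e51⟩ :=
    key (ψ ⟨u1, hu1K⟩) (ψ ⟨u2, hu2K⟩) (ψ ⟨u4, hu4K⟩) hadj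
  have hmem : ∀ x, ¬x = v1 → ¬x = v2 → ¬x = v3 → ¬x = v4 → ¬x = v5 →
      x ∈ ({v1, v2, v3, v4, v5} : Set V)ᶜ := fun x h1 h2 h3 h4 h5 => by
    simp only [Set.mem_compl_iff, Set.mem_insert_iff, Set.mem_singleton_iff, not_or]
    exact ⟨h1, h2, h3, h4, h5⟩
  let f : V → Fin 5 := fun x =>
    if h1 : x = v1 then x1 else if h2 : x = v2 then x2 else if h3 : x = v3 then x3
    else if h4 : x = v4 then x4 else if h5 : x = v5 then x5
    else ψ ⟨x, hmem x h1 h2 h3 h4 h5⟩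
  have hf1 : f v1 = x1 := by simp [f]
  have hf2 : f v2 = x2 := by simp [f, Ne.symm n12]
  have hf3 : f v3 = x3 := by simp [f, Ne.symm n13, Ne.symm n23]
  have hf4 : f v4 = x4 := by simp [f, Ne.symm n14, Ne.symm n24, Ne.symm n34]
  have hf5 : f v5 = x5 := by simp [f, Ne.symm n15, Ne.symm n25, Ne.symm n35, Ne.symm n45]
  have hfout : ∀ x (hx : x ∈ ({v1, v2, v3, v4, v5} : Set V)ᶜ), f x = ψ ⟨x, hx⟩ := by
    intro x hx
    have hx' := hx
    simp only [Set.mem_compl_iff, Set.mem_insert_iff, Set.mem_singleton_iff, not_or] at hx'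
    obtain ⟨k1, k2, k3, k4, k5⟩ := hx'
    simp [f, k1, k2, k3, k4, k5]
  refine ⟨⟨f, ?_⟩, fun x hx => hfout x hx⟩
  intro p q hpq
  by_cases hp1 : p = v1
  · subst hp1
    rcases hn1 q hpq with rfl | rfl | h
    · rw [hf1, hf2]; exact e12
    · rw [hf1, hf5]; exact e51.symm
    · rw [hf1, h, hfout u1 hu1K]; exact ha1
  by_cases hp2 : p = v2
  · subst hp2
    rcases hn2 q hpq with rfl | rfl | h
    · rw [hf2, hf1]; exact e12.symm
    · rw [hf2, hf3]; exact e23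
    · rw [hf2, h, hfout u2 hu2K]; exact hb2
  by_cases hp3 : p = v3
  · subst hp3
    rcases hn3 q hpq with rfl | rfl
    · rw [hf3, hf2]; exact e23.symm
    · rw [hf3, hf4]; exact e34
  by_cases hp4 : p = v4
  · subst hp4
    rcases hn4 q hpq with rfl | rfl | h
    · rw [hf4, hf3]; exact e34.symm
    · rw [hf4, hf5]; exact e45
    · rw [hf4, h, hfout u4 hu4K]; exact hc4
  by_cases hp5 : p = v5
  · subst hp5
    rcases hn5 q hpq with rfl | rfl
    · rw [hf5, hf4]; exact e45.symm
    · rw [hf5, hf1]; exact e51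
  have hp : p ∈ ({v1, v2, v3, v4, v5} : Set V)ᶜ := hmem p hp1 hp2 hp3 hp4 hp5
  by_cases hq1 : q = v1
  · subst hq1
    rcases hn1 p hpq.symm with rfl | rfl | h
    · exact absurd rfl hp2
    · exact absurd rfl hp5
    · rw [h, hfout u1 hu1K, hf1]; exact ha1.symm
  by_cases hq2 : q = v2
  · subst hq2
    rcases hn2 p hpq.symm with rfl | rfl | h
    · exact absurd rfl hp1
    · exact absurd rfl hp3
    · rw [h, hfout u2 hu2K, hf2]; exact hb2.symm
  by_cases hq3 : q = v3
  · subst hq3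
    rcases hn3 p hpq.symm with rfl | rfl
    · exact absurd rfl hp2
    · exact absurd rfl hp4
  by_cases hq4 : q = v4
  · subst hq4
    rcases hn4 p hpq.symm with rfl | rfl | h
    · exact absurd rfl hp3
    · exact absurd rfl hp5
    · rw [h, hfout u4 hu4K, hf4]; exact hc4.symm
  by_cases hq5 : q = v5
  · subst hq5
    rcases hn5 p hpq.symm with rfl | rfl
    · exact absurd rfl hp4
    · exact absurd rfl hp1
  have hq : q ∈ ({v1, v2, v3, v4, v5} : Set V)ᶜ := hmem q hq1 hq2 hq3 hq4 hq5
  rw [hfout p hp, hfout q hq]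
  exact ψ.map_adj hpq
end
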